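/- Let v_f > 0, k_j > 0, 0 < v_c < v_f, k_c = (v_f - v_c)·k_j/v_f, and fix an average density K with 3k_c/4 < K ≤ k_c. Over the admissible set S_K = {(k1,k2) : 0 ≤ k1 ≤ k_j, 0 ≤ k2 ≤ k_j, k1 + k2 = 2K}, the cruising space-mean speed W(k1,k2) = (k1·G(k1) + k2·min{v_c, G(k2)})/(k1 + k2) attains its maximum value v_c + (v_f - v_c)·(2 - k_c/K)·(1 - K/k_c), and this maximum is attained at (k1, k2) = (2K - k_c, k_c). -/

import Mathlib

/-- Greenshields speed at density `k`, with free-flow speed `vf` and jam density `kj`. -/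
noncomputable def G (vf kj k : ℝ) : ℝ := vf * (1 - k / kj)

/-- Two-bin network space-mean speed where all vehicles in bin 2 cruise for parking
at desired cruising speed `vc` (worst case). -/
noncomputable def W (vf kj vc k1 k2 : ℝ) : ℝ :=
  (k1 * G vf kj k1 + k2 * min vc (G vf kj k2)) / (k1 + k2)

/-- Admissible two-bin configurations at network average density `K`. -/
def SK (kj K : ℝ) : Set (ℝ × ℝ) :=
  {p | 0 ≤ p.1 ∧ p.1 ≤ kj ∧ 0 ≤ p.2 ∧ p.2 ≤ kj ∧ p.1 + p.2 = 2 * K}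

/-- With cruising (worst case), for `3kc/4 < K ≤ kc`, the maximum of `W` over `S_K`
is `vc + (vf - vc)(2 - kc/K)(1 - K/kc)`, attained at `(2K - kc, kc)`. -/

private lemma cruising_aux (vf vc kj K kc : ℝ) (hkj : kj ≠ 0) (hK : K ≠ 0) (hkc : kc ≠ 0)
    (hrel : vc * kj = vf * kj - vf * kc) :
    ((2 * K - kc) * (vf * (1 - (2 * K - kc) / kj)) + kc * vc) / (2 * K - kc + kc)
      = vc + (vf - vc) * (2 - kc / K) * (1 - K / kc) := by
  have h2 : 2 * K - kc + kc = 2 * K := by ring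
  rw [h2]
  field_simp
  linear_combination (4 * kc * K - kc ^ 2 - 4 * K ^ 2) * hrel

theorem cruising_upper_envelope_3 (vf kj vc K : ℝ)
    (hvf : 0 < vf) (hkj : 0 < kj) (hvc0 : 0 < vc) (hvcf : vc < vf)
    (hK0 : 3 * ((vf - vc) * kj / vf) / 4 < K) (hK : K ≤ (vf - vc) * kj / vf) :
    (∀ p ∈ SK kj K,
        W vf kj vc p.1 p.2 ≤
          vc + (vf - vc) * (2 - (vf - vc) * kj / vf / K) * (1 - K / ((vf - vc) * kj / vf))) ∧
    ((2 * K - (vf - vc) * kj / vf, (vf - vc) * kj / vf) ∈ SK kj K ∧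
      W vf kj vc (2 * K - (vf - vc) * kj / vf) ((vf - vc) * kj / vf) =
        vc + (vf - vc) * (2 - (vf - vc) * kj / vf / K) * (1 - K / ((vf - vc) * kj / vf))) := by
  have hvf' : vf ≠ 0 := ne_of_gt hvf
  have hkj' : kj ≠ 0 := ne_of_gt hkj
  have hvcvf : 0 < vf - vc := by linarith
  set kc := (vf - vc) * kj / vf with hkc
  have hkc0 : 0 < kc := by rw [hkc]; positivity
  have hK0' : 0 < K := by linarith
  have hK' : K ≠ 0 := ne_of_gt hK0'
  have hkc' : kc ≠ 0 := ne_of_gt hkc0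
  have hrel : vc * kj = vf * kj - vf * kc := by rw [hkc]; field_simp; ring
  have hkckj : kc < kj := by
    rw [hkc, div_lt_iff₀ hvf]; nlinarith
  have hGkc : G vf kj kc = vc := by
    unfold G; rw [hkc]; field_simp; ring
  clear_value kc
  have hM : vc + (vf - vc) * (2 - kc / K) * (1 - K / kc)
      = (2 * vf * K * kj - vf * ((2 * K - kc) ^ 2 + kc ^ 2)) / (kj * (2 * K)) := by
    field_simp
    linear_combination (-4 * kc * K + 2 * kc ^ 2 + 4 * K ^ 2) * hrel
  constructor
  · rintro ⟨a, b⟩ hp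
    simp only [SK, Set.mem_setOf_eq] at hp
    obtain ⟨ha0, hakj, hb0, hbkj, hab⟩ := hp
    have ha : a = 2 * K - b := by linarith
    subst ha
    rw [hM]
    rcases le_total vc (G vf kj b) with hmin | hmin
    · -- bin 2 cruises at `vc`, i.e. `b ≤ kc`
      have hbkc : b ≤ kc := by
        unfold G at hmin
        have h2 : vc * kj ≤ vf * (1 - b / kj) * kj :=
          mul_le_mul_of_nonneg_right hmin hkj.le
        have h3 : vf * (1 - b / kj) * kj = vf * kj - vf * b := by field_simp
        rw [h3, hrel] at h2
        nlinarith
      have hW : W vf kj vc (2 * K - b) b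
          = (vf * (2 * K - b) * (kj - (2 * K - b)) + vc * b * kj) / (kj * (2 * K)) := by
        unfold W
        rw [min_eq_left hmin]
        unfold G
        field_simp
        ring
      rw [hW]
      gcongr
      have hprod : 0 ≤ vf * ((kc - b) * (4 * K - b - 2 * kc)) := by
        have h1 : 0 ≤ kc - b := by linarith
        have h2 : 0 ≤ 4 * K - b - 2 * kc := by linarith
        positivity
      have hrelb : vc * kj * b = (vf * kj - vf * kc) * b := by rw [hrel]
      nlinarith [hprod, hrelb]
    · -- bin 2 at Greenshields speed, i.e. `kc ≤ b`
      have hbkc : kc ≤ b := by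
        unfold G at hmin
        have h2 : vf * (1 - b / kj) * kj ≤ vc * kj :=
          mul_le_mul_of_nonneg_right hmin hkj.le
        have h3 : vf * (1 - b / kj) * kj = vf * kj - vf * b := by field_simp
        rw [h3, hrel] at h2
        nlinarith
      have hW : W vf kj vc (2 * K - b) b
          = (vf * (2 * K - b) * (kj - (2 * K - b)) + vf * b * (kj - b)) / (kj * (2 * K)) := by
        unfold W
        rw [min_eq_right hmin]
        unfold G
        field_simp
        ring
      rw [hW]
      gcongr
      have hprod : 0 ≤ vf * ((b - kc) * (b + kc - 2 * K)) := by
        have h1 : 0 ≤ b - kc := by linarith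
        have h2 : 0 ≤ b + kc - 2 * K := by linarith
        positivity
      nlinarith [hprod]
  · constructor
    · exact ⟨by dsimp only; linarith, by dsimp only; linarith,
        by dsimp only; linarith, by dsimp only; linarith, by dsimp only; ring⟩
    · unfold W
      rw [hGkc, min_self]
      unfold G
      exact cruising_aux vf vc kj K kc hkj' hK' hkc' hrel
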